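/- In the Poisson algebra of the Mumford/PI system, the spectral Darboux coordinates are canonical: if λ_1, ..., λ_g are the (assumed distinct) roots of β(λ) and μ_j = α(λ_j), then {λ_j, λ_k} = 0, {μ_j, μ_k} = 0, and {λ_j, μ_k} = δ_{jk}. -/

import Mathlib

/-- the spectral Darboux coordinates are canonical.  In the Poisson
algebra generated by the coefficients `a n` of `α(λ) = a_1 λ^{g-1} + ⋯ + a_g` and
`b n` of `β(λ) = λ^g + b_1 λ^{g-1} + ⋯ + b_g` (with the generalized linear brackets,
written coefficientwise: `{a_n, a_m} = 0`, `{b_n, b_m} = 0`, and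
`{a_n, b_k} = b_{n+k-g-1}` if `n + k ≥ g + 1` and `0` otherwise, where `b_0 = 1`),
if `λ_1, …, λ_g` are the roots of `β` — assumed pairwise distinct, in the sense that
the differences are invertible — and `μ_j = α(λ_j)`, then
`{λ_j, λ_k} = 0`, `{μ_j, μ_k} = 0`, `{λ_j, μ_k} = δ_{jk}`. -/
theorem spectral_darboux_canonical (A : Type*) [CommRing A]
    (P : A → A → A)
    (Paddl : ∀ x y z : A, P (x + y) z = P x z + P y z)
    (Paddr : ∀ x y z : A, P x (y + z) = P x y + P x z)
    (Pleibl : ∀ x y z : A, P (x * y) z = x * P y z + P x z * y)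
    (Pleibr : ∀ x y z : A, P x (y * z) = P x y * z + y * P x z)
    (Pskew : ∀ x y : A, P x y = -P y x)
    (g : ℕ) (a b : ℕ → A) (hb0 : b 0 = 1)
    (haa : ∀ n m, P (a n) (a m) = 0)
    (hbb : ∀ n m, P (b n) (b m) = 0)
    (hab : ∀ n k, 1 ≤ n → n ≤ g → 1 ≤ k → k ≤ g →
      P (a n) (b k) = if g + 1 ≤ n + k then b (n + k - (g + 1)) else 0)
    (lam : Fin g → A)
    (hroots : ∀ k, 1 ≤ k → k ≤ g →
      b k = (∏ j : Fin g,
        (Polynomial.X - Polynomial.C (lam j)) : Polynomial A).coeff (g - k))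
    (hdist : ∀ j k : Fin g, j ≠ k → IsUnit (lam j - lam k))
    (mu : Fin g → A)
    (hmu : ∀ j, mu j = ∑ n ∈ Finset.Icc 1 g, a n * lam j ^ (g - n)) :
    (∀ j k, P (lam j) (lam k) = 0) ∧
    (∀ j k, P (mu j) (mu k) = 0) ∧
    (∀ j k : Fin g, P (lam j) (mu k) = if j = k then 1 else 0) := by
  classical
  obtain hA | hA := subsingleton_or_nontrivial A
  · exact ⟨fun j k => Subsingleton.elim _ _, fun j k => Subsingleton.elim _ _,
      fun j k => Subsingleton.elim _ _⟩
  rcases Nat.eq_zero_or_pos g with rfl | hg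
  · exact ⟨fun j => j.elim0, fun j => j.elim0, fun j => j.elim0⟩
  -- basic properties of the bracket
  have P0l : ∀ x : A, P 0 x = 0 := by
    intro x
    have h := Paddl 0 0 x
    rw [add_zero] at h
    exact left_eq_add.mp h
  have P1l : ∀ x : A, P 1 x = 0 := by
    intro x
    have h := Pleibl 1 1 x
    rw [one_mul, one_mul, mul_one] at h
    exact left_eq_add.mp h
  have Psuml : ∀ (s : Finset ℕ) (f : ℕ → A) (x : A),
      P (∑ i ∈ s, f i) x = ∑ i ∈ s, P (f i) x := by
    intro s f x
    induction s using Finset.induction_on with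
    | empty => simpa using P0l x
    | @insert _ _ h ih =>
        rw [Finset.sum_insert h, Paddl, ih, Finset.sum_insert h]
  have Psumr : ∀ (s : Finset ℕ) (f : ℕ → A) (x : A),
      P x (∑ i ∈ s, f i) = ∑ i ∈ s, P x (f i) := by
    intro s f x
    rw [Pskew, Psuml, ← Finset.sum_neg_distrib]
    exact Finset.sum_congr rfl fun i _ => (Pskew x (f i)).symm
  have Ppow_aux : ∀ (n : ℕ) (y x : A),
      P (y ^ (n + 1)) x = ((n + 1 : ℕ) : A) * (y ^ n * P y x) := by
    intro n
    induction n with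
    | zero => intro y x; simp
    | succ n ih =>
        intro y x
        rw [pow_succ, Pleibl, ih y x]
        push_cast
        ring
  have Ppowl : ∀ (n : ℕ) (y x : A), P (y ^ n) x = ((n : ℕ) : A) * (y ^ (n - 1) * P y x) := by
    intro n y x
    cases n with
    | zero => simp [P1l]
    | succ n => simpa using Ppow_aux n y x
  -- injectivity of lam
  have hlaminj : Function.Injective lam := by
    intro j k hjk
    by_contra h
    have := hdist j k h
    rw [hjk, sub_self] at this
    exact not_isUnit_zero this
  -- unit diagonal products
  have hcu : ∀ m : Fin g, IsUnit (∏ i ∈ Finset.univ.erase m, (lam m - lam i)) := by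
    intro m
    refine Finset.prod_induction _ IsUnit (fun _ _ => IsUnit.mul) isUnit_one ?_
    intro i hi
    exact hdist m i (Ne.symm (Finset.mem_erase.mp hi).1)
  -- the polynomial Q
  set Q : Polynomial A := ∏ j : Fin g, (Polynomial.X - Polynomial.C (lam j)) with hQdef
  have hmonic : Q.Monic :=
    Polynomial.monic_prod_of_monic _ _ fun j _ => Polynomial.monic_X_sub_C _
  have hdeg : Q.natDegree = g := by
    rw [hQdef, Polynomial.natDegree_prod_of_monic _ _ fun j _ => Polynomial.monic_X_sub_C _]
    simp [Polynomial.natDegree_X_sub_C]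
  have hQeq : Q = Polynomial.X ^ g
      + ∑ k ∈ Finset.Icc 1 g, Polynomial.C (b k) * Polynomial.X ^ (g - k) := by
    ext i
    rw [Polynomial.coeff_add, Polynomial.coeff_X_pow, Polynomial.finset_sum_coeff]
    simp only [Polynomial.coeff_C_mul, Polynomial.coeff_X_pow, mul_ite, mul_one, mul_zero]
    rcases lt_trichotomy i g with h | h | h
    · rw [Finset.sum_eq_single (g - i)
        (fun k hk hne => if_neg (by simp only [Finset.mem_Icc] at hk; omega))
        (fun h' => absurd (Finset.mem_Icc.mpr ⟨by omega, by omega⟩) h'),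
        if_neg (by omega), if_pos (by omega), zero_add]
      have h2 := hroots (g - i) (by omega) (by omega)
      rw [show g - (g - i) = i by omega] at h2
      exact h2.symm
    · rw [h, if_pos rfl,
        Finset.sum_eq_zero (fun k hk => if_neg (by simp only [Finset.mem_Icc] at hk; omega)),
        add_zero, ← hdeg]
      exact hmonic.coeff_natDegree
    · rw [if_neg (by omega),
        Finset.sum_eq_zero (fun k hk => if_neg (by simp only [Finset.mem_Icc] at hk; omega)),
        add_zero]
      exact Polynomial.coeff_eq_zero_of_natDegree_lt (by omega)
  -- beta vanishes at the roots
  have Broot : ∀ m : Fin g, lam m ^ g + ∑ k ∈ Finset.Icc 1 g, b k * lam m ^ (g - k) = 0 := by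
    intro m
    have h2 : Polynomial.eval (lam m) Q = 0 := by
      rw [hQdef, Polynomial.eval_prod]
      exact Finset.prod_eq_zero (Finset.mem_univ m) (by simp)
    rw [hQeq] at h2
    simpa [Polynomial.eval_finset_sum] using h2
  -- derivative of Q at the roots
  have cm_eq : ∀ m : Fin g,
      ((g : ℕ) : A) * lam m ^ (g - 1)
        + ∑ k ∈ Finset.Icc 1 g, b k * ((g - k : ℕ) : A) * lam m ^ (g - k - 1)
      = ∏ i ∈ Finset.univ.erase m, (lam m - lam i) := by
    intro m
    have hL : Polynomial.eval (lam m) (Polynomial.derivative Q)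
        = ∏ i ∈ Finset.univ.erase m, (lam m - lam i) := by
      rw [hQdef, Finset.prod_eq_multiset_prod]
      have hr : lam m ∈ Multiset.map lam Finset.univ.val :=
        Multiset.mem_map.mpr ⟨m, Finset.mem_univ m, rfl⟩
      have hmm : Multiset.map (fun j => Polynomial.X - Polynomial.C (lam j)) Finset.univ.val
          = Multiset.map (fun a => Polynomial.X - Polynomial.C a)
              (Multiset.map lam Finset.univ.val) := by
        rw [Multiset.map_map]; rfl
      rw [hmm, Polynomial.eval_multiset_prod_X_sub_C_derivative hr,
        ← Multiset.map_erase lam hlaminj m Finset.univ.val, Multiset.map_map,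
        Finset.prod_eq_multiset_prod, Finset.erase_val]
      rfl
    have hR : Polynomial.eval (lam m) (Polynomial.derivative (Polynomial.X ^ g
        + ∑ k ∈ Finset.Icc 1 g, Polynomial.C (b k) * Polynomial.X ^ (g - k)))
        = ((g : ℕ) : A) * lam m ^ (g - 1)
          + ∑ k ∈ Finset.Icc 1 g, b k * ((g - k : ℕ) : A) * lam m ^ (g - k - 1) := by
      rw [Polynomial.derivative_add, Polynomial.derivative_sum]
      simp only [Polynomial.derivative_C_mul, Polynomial.derivative_X_pow]
      simp only [Polynomial.eval_add, Polynomial.eval_finset_sum, Polynomial.eval_mul,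
        Polynomial.eval_C, Polynomial.eval_pow, Polynomial.eval_X]
      refine congrArg₂ (· + ·) rfl ?_
      exact Finset.sum_congr rfl fun k _ => by ring
    rw [← hR, ← hQeq, hL]
  -- the key implicit-differentiation identity
  have KL : ∀ (m : Fin g) (x : A),
      (∏ i ∈ Finset.univ.erase m, (lam m - lam i)) * P (lam m) x
      = -∑ k ∈ Finset.Icc 1 g, lam m ^ (g - k) * P (b k) x := by
    intro m x
    have h0 : P (lam m ^ g + ∑ k ∈ Finset.Icc 1 g, b k * lam m ^ (g - k)) x = 0 := by
      rw [Broot m]; exact P0l x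
    rw [Paddl, Psuml] at h0
    simp only [Pleibl, Ppowl] at h0
    rw [Finset.sum_add_distrib] at h0
    have e1 : ∑ k ∈ Finset.Icc 1 g,
        b k * (((g - k : ℕ) : A) * (lam m ^ (g - k - 1) * P (lam m) x))
        = (∑ k ∈ Finset.Icc 1 g, b k * ((g - k : ℕ) : A) * lam m ^ (g - k - 1))
            * P (lam m) x := by
      rw [Finset.sum_mul]; exact Finset.sum_congr rfl fun k _ => by ring
    rw [e1] at h0
    have e2 : ∑ k ∈ Finset.Icc 1 g, P (b k) x * lam m ^ (g - k)
        = ∑ k ∈ Finset.Icc 1 g, lam m ^ (g - k) * P (b k) x :=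
      Finset.sum_congr rfl fun k _ => mul_comm _ _
    rw [e2] at h0
    rw [← cm_eq m, add_mul]
    linear_combination h0
  -- brackets with the b's vanish
  have Plb : ∀ (m : Fin g) (k : ℕ), P (lam m) (b k) = 0 := by
    intro m k
    have h := KL m (b k)
    rw [Finset.sum_eq_zero (fun n _ => by rw [hbb, mul_zero]), neg_zero] at h
    exact ((hcu m).mul_right_eq_zero).mp h
  -- first claim
  have Pll : ∀ j k : Fin g, P (lam j) (lam k) = 0 := by
    intro j k
    have h := KL j (lam k)
    rw [Finset.sum_eq_zero
      (fun n _ => by rw [Pskew (b n) (lam k), Plb, neg_zero, mul_zero]), neg_zero] at h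
    exact ((hcu j).mul_right_eq_zero).mp h
  -- bracket with the a's
  have Pla : ∀ (j : Fin g) (n : ℕ), 1 ≤ n → n ≤ g →
      (∏ i ∈ Finset.univ.erase j, (lam j - lam i)) * P (lam j) (a n)
      = ∑ i ∈ Finset.range n, b i * lam j ^ (n - 1 - i) := by
    intro j n h1 h2
    have h := KL j (a n)
    rw [← Finset.sum_neg_distrib] at h
    have e' : ∀ k ∈ Finset.Icc 1 g, -(lam j ^ (g - k) * P (b k) (a n))
        = if g + 1 ≤ n + k then b (n + k - (g + 1)) * lam j ^ (g - k) else 0 := by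
      intro k hk
      simp only [Finset.mem_Icc] at hk
      rw [Pskew (b k) (a n), hab n k h1 h2 hk.1 hk.2]
      split_ifs <;> ring
    rw [Finset.sum_congr rfl e'] at h
    rw [← Finset.sum_filter] at h
    have hfil : (Finset.Icc 1 g).filter (fun k => g + 1 ≤ n + k)
        = Finset.Icc (g + 1 - n) g := by
      ext k
      simp only [Finset.mem_filter, Finset.mem_Icc]
      omega
    rw [hfil] at h
    rw [h]
    refine Finset.sum_nbij' (fun k => n + k - (g + 1)) (fun i => g + 1 - n + i)
      ?_ ?_ ?_ ?_ ?_
    · intro k hk; simp only [Finset.mem_Icc] at hk; simp only [Finset.mem_range]; omega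
    · intro i hi; simp only [Finset.mem_range] at hi; simp only [Finset.mem_Icc]; omega
    · intro k hk; simp only [Finset.mem_Icc] at hk; omega
    · intro i hi; simp only [Finset.mem_range] at hi; omega
    · intro k hk
      simp only [Finset.mem_Icc] at hk
      rw [show n - 1 - (n + k - (g + 1)) = g - k by omega]
  -- shift lemma
  have hshift : ∀ G : ℕ → A,
      ∑ i ∈ Finset.range g, G (i + 1) = ∑ k ∈ Finset.Icc 1 g, G k := by
    intro G
    refine Finset.sum_nbij' (fun i => i + 1) (fun k => k - 1) ?_ ?_ ?_ ?_ ?_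
    · intro i hi; simp only [Finset.mem_range] at hi; simp only [Finset.mem_Icc]; omega
    · intro k hk; simp only [Finset.mem_Icc] at hk; simp only [Finset.mem_range]; omega
    · intro i _; omega
    · intro k hk; simp only [Finset.mem_Icc] at hk; omega
    · intro i _; rfl
  -- sum swap lemma
  have swap : ∀ F : ℕ → ℕ → A,
      (∑ n ∈ Finset.Icc 1 g, ∑ i ∈ Finset.range n, F n i)
      = ∑ i ∈ Finset.range g, ∑ n ∈ Finset.Icc (i + 1) g, F n i := by
    intro F
    rw [Finset.sum_sigma', Finset.sum_sigma']
    refine Finset.sum_nbij' (fun p => ⟨p.2, p.1⟩) (fun p => ⟨p.2, p.1⟩) ?_ ?_ ?_ ?_ ?_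
    · intro p hp
      simp only [Finset.mem_sigma, Finset.mem_Icc, Finset.mem_range] at hp ⊢
      omega
    · intro p hp
      simp only [Finset.mem_sigma, Finset.mem_Icc, Finset.mem_range] at hp ⊢
      omega
    · intro p _; rfl
    · intro p _; rfl
    · intro p _; rfl
  -- the telescoping identity
  have SL : ∀ x y : A,
      (∑ n ∈ Finset.Icc 1 g,
        (∑ i ∈ Finset.range n, b i * x ^ (n - 1 - i)) * y ^ (g - n)) * (x - y)
      = (x ^ g + ∑ k ∈ Finset.Icc 1 g, b k * x ^ (g - k))
        - (y ^ g + ∑ k ∈ Finset.Icc 1 g, b k * y ^ (g - k)) := by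
    have exp : ∀ z : A, ∑ i ∈ Finset.range g, b i * z ^ (g - i)
        = z ^ g + ∑ k ∈ Finset.Icc 1 g, b k * z ^ (g - k) - b g := by
      intro z
      have h1 := Finset.sum_range_succ (fun i => b i * z ^ (g - i)) g
      have h2 := Finset.sum_range_succ' (fun i => b i * z ^ (g - i)) g
      rw [hshift (fun k => b k * z ^ (g - k)), hb0] at h2
      simp only [Nat.sub_self, pow_zero, mul_one, Nat.sub_zero, one_mul] at h1 h2
      linear_combination h2 - h1
    intro x y
    rw [Finset.sum_mul]
    rw [Finset.sum_congr rfl (fun n _ => by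
      rw [Finset.sum_mul, Finset.sum_mul] :
      ∀ n ∈ Finset.Icc 1 g,
        (∑ i ∈ Finset.range n, b i * x ^ (n - 1 - i)) * y ^ (g - n) * (x - y)
        = ∑ i ∈ Finset.range n, b i * x ^ (n - 1 - i) * y ^ (g - n) * (x - y))]
    rw [swap (fun n i => b i * x ^ (n - 1 - i) * y ^ (g - n) * (x - y))]
    have step2 : ∀ i ∈ Finset.range g,
        ∑ n ∈ Finset.Icc (i + 1) g, b i * x ^ (n - 1 - i) * y ^ (g - n) * (x - y)
        = b i * x ^ (g - i) - b i * y ^ (g - i) := by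
      intro i hi
      simp only [Finset.mem_range] at hi
      have key : ∑ n ∈ Finset.Icc (i + 1) g, b i * x ^ (n - 1 - i) * y ^ (g - n) * (x - y)
          = b i * ((∑ t ∈ Finset.range (g - i), x ^ t * y ^ (g - i - 1 - t)) * (x - y)) := by
        rw [Finset.sum_mul, Finset.mul_sum]
        refine Finset.sum_nbij' (fun n => n - 1 - i) (fun t => t + i + 1) ?_ ?_ ?_ ?_ ?_
        · intro n hn; simp only [Finset.mem_Icc] at hn; simp only [Finset.mem_range]; omega
        · intro t ht; simp only [Finset.mem_range] at ht; simp only [Finset.mem_Icc]; omega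
        · intro n hn; simp only [Finset.mem_Icc] at hn; omega
        · intro t ht; simp only [Finset.mem_range] at ht; omega
        · intro n hn
          simp only [Finset.mem_Icc] at hn
          rw [show g - i - 1 - (n - 1 - i) = g - n by omega]
          ring
      rw [key, geom_sum₂_mul, mul_sub]
    rw [Finset.sum_congr rfl step2, Finset.sum_sub_distrib, exp x, exp y]
    ring
  -- the diagonal identity
  have SD : ∀ j : Fin g,
      ∑ n ∈ Finset.Icc 1 g,
        (∑ i ∈ Finset.range n, b i * lam j ^ (n - 1 - i)) * lam j ^ (g - n)
      = ∏ i ∈ Finset.univ.erase j, (lam j - lam i) := by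
    intro j
    rw [← cm_eq j]
    have step1 : ∀ n ∈ Finset.Icc 1 g,
        (∑ i ∈ Finset.range n, b i * lam j ^ (n - 1 - i)) * lam j ^ (g - n)
        = ∑ i ∈ Finset.range n, b i * lam j ^ (g - 1 - i) := by
      intro n hn
      simp only [Finset.mem_Icc] at hn
      rw [Finset.sum_mul]
      refine Finset.sum_congr rfl fun i hi => ?_
      simp only [Finset.mem_range] at hi
      rw [mul_assoc, ← pow_add, show n - 1 - i + (g - n) = g - 1 - i by omega]
    rw [Finset.sum_congr rfl step1, swap (fun n i => b i * lam j ^ (g - 1 - i))]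
    have step2 : ∀ i ∈ Finset.range g,
        ∑ _n ∈ Finset.Icc (i + 1) g, b i * lam j ^ (g - 1 - i)
        = ((g - i : ℕ) : A) * (b i * lam j ^ (g - 1 - i)) := by
      intro i hi
      simp only [Finset.mem_range] at hi
      rw [Finset.sum_const, Nat.card_Icc, nsmul_eq_mul]
      congr 2
      omega
    rw [Finset.sum_congr rfl step2]
    -- now convert the range-g sum to the Icc form
    have h1 := Finset.sum_range_succ
      (fun i => ((g - i : ℕ) : A) * (b i * lam j ^ (g - 1 - i))) g
    have h2 := Finset.sum_range_succ'
      (fun i => ((g - i : ℕ) : A) * (b i * lam j ^ (g - 1 - i))) g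
    rw [hshift (fun k => ((g - k : ℕ) : A) * (b k * lam j ^ (g - 1 - k)))] at h2
    simp only [Nat.sub_self, Nat.cast_zero, zero_mul, add_zero, Nat.sub_zero, hb0, one_mul] at h1 h2
    rw [h1] at h2
    rw [h2]
    rw [Finset.sum_congr rfl (fun k hk => by
      rw [show g - 1 - k = g - k - 1 by omega]; ring :
      ∀ k ∈ Finset.Icc 1 g, ((g - k : ℕ) : A) * (b k * lam j ^ (g - 1 - k))
        = b k * ((g - k : ℕ) : A) * lam j ^ (g - k - 1))]
    ring
  -- the key orthogonality relation
  have KEY3 : ∀ j k : Fin g,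
      ∑ n ∈ Finset.Icc 1 g, P (lam j) (a n) * lam k ^ (g - n)
      = if j = k then 1 else 0 := by
    intro j k
    have hS : (∏ i ∈ Finset.univ.erase j, (lam j - lam i))
        * ∑ n ∈ Finset.Icc 1 g, P (lam j) (a n) * lam k ^ (g - n)
        = ∑ n ∈ Finset.Icc 1 g,
            (∑ i ∈ Finset.range n, b i * lam j ^ (n - 1 - i)) * lam k ^ (g - n) := by
      rw [Finset.mul_sum]
      refine Finset.sum_congr rfl fun n hn => ?_
      simp only [Finset.mem_Icc] at hn
      rw [← mul_assoc, Pla j n hn.1 hn.2]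
    by_cases hjk : j = k
    · subst hjk
      rw [if_pos rfl]
      refine (hcu j).mul_left_cancel ?_
      rw [hS, SD j, mul_one]
    · rw [if_neg hjk]
      have h1 : ((∏ i ∈ Finset.univ.erase j, (lam j - lam i))
          * ∑ n ∈ Finset.Icc 1 g, P (lam j) (a n) * lam k ^ (g - n))
          * (lam j - lam k) = 0 := by
        rw [hS, SL (lam j) (lam k), Broot j, Broot k, sub_zero]
      exact ((hcu j).mul_right_eq_zero).mp
        (((hdist j k hjk).mul_left_eq_zero).mp h1)
  -- third claim
  have G3 : ∀ j k : Fin g, P (lam j) (mu k) = if j = k then 1 else 0 := by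
    intro j k
    rw [hmu k, Psumr]
    rw [Finset.sum_congr rfl (fun n _ => by
      rw [Pleibr]
      have hz : P (lam j) (lam k ^ (g - n)) = 0 := by
        rw [Pskew (lam j), Ppowl, Pll k j, mul_zero, mul_zero, neg_zero]
      rw [hz, mul_zero, add_zero] :
      ∀ n ∈ Finset.Icc 1 g, P (lam j) (a n * lam k ^ (g - n))
        = P (lam j) (a n) * lam k ^ (g - n))]
    exact KEY3 j k
  -- second claim
  have G2 : ∀ j k : Fin g, P (mu j) (mu k) = 0 := by
    intro j k
    have hPamu : ∀ n : ℕ, P (a n) (mu k)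
        = -∑ m ∈ Finset.Icc 1 g,
            a m * (((g - m : ℕ) : A) * (lam k ^ (g - m - 1) * P (lam k) (a n))) := by
      intro n
      rw [hmu k, Psumr, ← Finset.sum_neg_distrib]
      refine Finset.sum_congr rfl fun m _ => ?_
      rw [Pleibr, haa, zero_mul, zero_add, Pskew (a n), Ppowl]
      ring
    rw [hmu j, Psuml]
    rw [Finset.sum_congr rfl (fun n _ => by rw [Pleibl, Ppowl] :
      ∀ n ∈ Finset.Icc 1 g, P (a n * lam j ^ (g - n)) (mu k)
        = a n * (((g - n : ℕ) : A) * (lam j ^ (g - n - 1) * P (lam j) (mu k)))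
          + P (a n) (mu k) * lam j ^ (g - n))]
    rw [Finset.sum_add_distrib]
    have hsecond : ∑ n ∈ Finset.Icc 1 g, P (a n) (mu k) * lam j ^ (g - n)
        = -∑ m ∈ Finset.Icc 1 g,
            a m * (((g - m : ℕ) : A) * (lam k ^ (g - m - 1) * (if k = j then 1 else 0))) := by
      rw [Finset.sum_congr rfl (fun n _ => by
        rw [hPamu n, neg_mul, Finset.sum_mul, ← Finset.sum_neg_distrib] :
        ∀ n ∈ Finset.Icc 1 g, P (a n) (mu k) * lam j ^ (g - n)
          = ∑ m ∈ Finset.Icc 1 g,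
              -(a m * (((g - m : ℕ) : A) * (lam k ^ (g - m - 1) * P (lam k) (a n)))
                * lam j ^ (g - n)))]
      rw [Finset.sum_comm, ← Finset.sum_neg_distrib]
      refine Finset.sum_congr rfl fun m _ => ?_
      have hrw : ∀ S : A,
          (∑ n ∈ Finset.Icc 1 g, P (lam k) (a n) * lam j ^ (g - n)) = S →
          ∑ n ∈ Finset.Icc 1 g,
            -(a m * (((g - m : ℕ) : A) * (lam k ^ (g - m - 1) * P (lam k) (a n)))
              * lam j ^ (g - n))
          = -(a m * (((g - m : ℕ) : A) * (lam k ^ (g - m - 1) * S))) := by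
        intro S hSe
        rw [← hSe]
        simp only [Finset.mul_sum]
        rw [← Finset.sum_neg_distrib]
        refine Finset.sum_congr rfl fun n _ => by ring
      exact hrw _ (KEY3 k j)
    rw [hsecond, G3 j k]
    by_cases hjk : j = k
    · subst hjk
      simp
    · have hkj : ¬ k = j := fun h => hjk h.symm
      simp [hjk, hkj]
  exact ⟨Pll, G2, G3⟩
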